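/- Let (Ω, μ) be a σ-finite measure space and γ : Ω → [0,∞) measurable. Fix L ≥ 1 and let ((τ^1, w^1), …, (τ^L, w^L)) be random pairs in Ω × [0,∞), defined on a common probability space, such that for each l and every measurable h : Ω → [0,∞], E[w^l · h(τ^l)] = ∫ γ·h dμ. Conditionally on the whole collection, draw indices a^1, …, a^L in {1, …, L} such that for each l and k, the conditional probability that a^l = k equals w^k / Σ_{l'} w^{l'} (on the event Σ_{l'} w^{l'} > 0; on the complementary event the indices may be arbitrary). Then for each l, the resampled pair (τ^{a^l}, (1/L)·Σ_{l'=1}^L w^{l'}) is strictly properly weighted for γ. -/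

import Mathlib

open MeasureTheory ProbabilityTheory ENNReal NNReal

/-- Strict proper weighting of the resample combinator: multinomial importance
resampling, with outgoing weights set to the average of incoming weights,
preserves strict proper weighting. -/
theorem resample_strictly_properly_weighted
    {Ω α : Type*} [MeasurableSpace Ω] [MeasurableSpace α]
    (μ : Measure Ω) [SigmaFinite μ]
    (P : Measure α) [IsProbabilityMeasure P]
    (γ : Ω → ℝ≥0) (hγ : Measurable γ)
    (L : ℕ) (hL : 1 ≤ L)
    (τ : Fin L → α → Ω) (w : Fin L → α → ℝ≥0) (a : Fin L → α → Fin L)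
    (hτ : ∀ l, Measurable (τ l)) (hw : ∀ l, Measurable (w l))
    (ha : ∀ l, Measurable (a l))
    (hpw : ∀ l, ∀ h : Ω → ℝ≥0∞, Measurable h →
      ∫⁻ ω, (w l ω : ℝ≥0∞) * h (τ l ω) ∂P = ∫⁻ x, (γ x : ℝ≥0∞) * h x ∂μ)
    (hres : ∀ l k : Fin L, ∀ g : (Fin L → Ω × ℝ≥0) → ℝ≥0∞, Measurable g →
      ∫⁻ ω in {ω | 0 < ∑ i, w i ω},
          (if a l ω = k then (1 : ℝ≥0∞) else 0) * g (fun i => (τ i ω, w i ω)) ∂P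
        = ∫⁻ ω in {ω | 0 < ∑ i, w i ω},
            ((w k ω : ℝ≥0∞) / ∑ i, (w i ω : ℝ≥0∞)) * g (fun i => (τ i ω, w i ω)) ∂P)
    (l : Fin L) (h : Ω → ℝ≥0∞) (hh : Measurable h) :
    ∫⁻ ω, ((∑ i, (w i ω : ℝ≥0∞)) / (L : ℝ≥0∞)) * h (τ (a l ω) ω) ∂P
      = ∫⁻ x, (γ x : ℝ≥0∞) * h x ∂μ := by
  classical
  set I := ∫⁻ x, (γ x : ℝ≥0∞) * h x ∂μ with hI
  set S : α → ℝ≥0∞ := fun ω => ∑ i, (w i ω : ℝ≥0∞) with hS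
  have hSmeas : Measurable S :=
    Finset.measurable_sum _ fun i _ => (hw i).coe_nnreal_ennreal
  have hSeq : {ω | 0 < ∑ i, w i ω} = {ω | 0 < S ω} := by
    ext ω
    simp only [hS, Set.mem_setOf_eq]
    rw [← ENNReal.coe_finset_sum, ENNReal.coe_pos]
  have hSset : MeasurableSet {ω | 0 < S ω} :=
    measurableSet_lt measurable_const hSmeas
  have hSne : ∀ ω, S ω ≠ ⊤ := by
    intro ω
    simp [hS]
  have hL0 : (L : ℝ≥0∞) ≠ 0 := by
    exact Nat.cast_ne_zero.mpr (by omega)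
  -- integrands
  set F : Fin L → α → ℝ≥0∞ :=
    fun k ω => (if a l ω = k then (1 : ℝ≥0∞) else 0) * (S ω / L * h (τ k ω)) with hF
  have hFmeas : ∀ k, Measurable (F k) := by
    intro k
    apply Measurable.mul
    · exact Measurable.ite ((ha l) (measurableSet_singleton k)) measurable_const
        measurable_const
    · exact (hSmeas.div measurable_const).mul (hh.comp (hτ k))
  have hdecomp : ∀ ω, S ω / L * h (τ (a l ω) ω) = ∑ k, F k ω := by
    intro ω
    simp only [hF, ite_mul, one_mul, zero_mul, Finset.sum_ite_eq, Finset.mem_univ, if_true]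
  set g : Fin L → (Fin L → Ω × ℝ≥0) → ℝ≥0∞ :=
    fun k f => (∑ i, ((f i).2 : ℝ≥0∞)) / L * h ((f k).1) with hg
  have hgmeas : ∀ k, Measurable (g k) := by
    intro k
    apply Measurable.mul
    · exact (Finset.measurable_sum _ fun i _ =>
        ((measurable_pi_apply i).snd).coe_nnreal_ennreal).div measurable_const
    · exact hh.comp ((measurable_pi_apply k).fst)
  have hIk : ∀ k : Fin L, ∫⁻ ω, F k ω ∂P = I / L := by
    intro k
    have h1 : ∫⁻ ω, F k ω ∂P = ∫⁻ ω in {ω | 0 < S ω}, F k ω ∂P := by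
      rw [← lintegral_add_compl (F k) hSset]
      have hz : ∫⁻ ω in {ω | 0 < S ω}ᶜ, F k ω ∂P = 0 := by
        rw [setLIntegral_congr_fun hSset.compl
          (fun ω hω => ?_), lintegral_zero]
        have hS0 : S ω = 0 := le_antisymm (not_lt.mp hω) zero_le
        simp [hF, hS0, ENNReal.zero_div]
      rw [hz, add_zero]
    have h2 : ∫⁻ ω in {ω | 0 < S ω}, F k ω ∂P
        = ∫⁻ ω in {ω | 0 < S ω}, (w k ω : ℝ≥0∞) / S ω * (S ω / L * h (τ k ω)) ∂P := by
      have := hres l k (g k) (hgmeas k)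
      rw [hSeq] at this
      simpa [hF, hg, hS] using this
    have h3 : ∫⁻ ω in {ω | 0 < S ω}, (w k ω : ℝ≥0∞) / S ω * (S ω / L * h (τ k ω)) ∂P
        = ∫⁻ ω in {ω | 0 < S ω}, (w k ω : ℝ≥0∞) / L * h (τ k ω) ∂P := by
      apply setLIntegral_congr_fun hSset
      refine fun ω hω => ?_
      have hS0 : S ω ≠ 0 := (hω : 0 < S ω).ne'
      simp only [div_eq_mul_inv]
      rw [show (w k ω : ℝ≥0∞) * (S ω)⁻¹ * (S ω * (L : ℝ≥0∞)⁻¹ * h (τ k ω))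
          = ((S ω)⁻¹ * S ω) * ((w k ω : ℝ≥0∞) * (L : ℝ≥0∞)⁻¹ * h (τ k ω)) from by ring,
        ENNReal.inv_mul_cancel hS0 (hSne ω), one_mul]
    have h4 : ∫⁻ ω in {ω | 0 < S ω}, (w k ω : ℝ≥0∞) / L * h (τ k ω) ∂P
        = ∫⁻ ω, (w k ω : ℝ≥0∞) / L * h (τ k ω) ∂P := by
      have hz : ∫⁻ ω in {ω | 0 < S ω}ᶜ, (w k ω : ℝ≥0∞) / L * h (τ k ω) ∂P = 0 := by
        rw [setLIntegral_congr_fun hSset.compl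
          (fun ω hω => ?_), lintegral_zero]
        have hS0 : S ω = 0 := le_antisymm (not_lt.mp hω) zero_le
        have hwk : (w k ω : ℝ≥0∞) = 0 := by
          have := (Finset.sum_eq_zero_iff.mp hS0) k (Finset.mem_univ k)
          simpa using this
        simp [hwk, ENNReal.zero_div]
      conv_rhs => rw [← lintegral_add_compl (fun ω => (w k ω : ℝ≥0∞) / L * h (τ k ω)) hSset]
      rw [hz, add_zero]
    have h5 : ∫⁻ ω, (w k ω : ℝ≥0∞) / L * h (τ k ω) ∂P = I / L := by
      have hf : Measurable (fun ω => (w k ω : ℝ≥0∞) * h (τ k ω)) :=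
        (hw k).coe_nnreal_ennreal.mul (hh.comp (hτ k))
      simp only [div_eq_mul_inv, mul_right_comm]
      rw [lintegral_mul_const (f := fun ω => (w k ω : ℝ≥0∞) * h (τ k ω)) _ hf,
        hpw k h hh]
    rw [h1, h2, h3, h4, h5]
  calc ∫⁻ ω, S ω / L * h (τ (a l ω) ω) ∂P
      = ∫⁻ ω, ∑ k, F k ω ∂P := by
        exact lintegral_congr fun ω => hdecomp ω
    _ = ∑ k, ∫⁻ ω, F k ω ∂P := lintegral_finset_sum _ fun k _ => hFmeas k
    _ = ∑ _k : Fin L, I / L := by simp [hIk]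
    _ = I := by
        rw [Finset.sum_const, Finset.card_univ, Fintype.card_fin, nsmul_eq_mul,
          ENNReal.mul_div_cancel hL0 (ENNReal.natCast_ne_top L)]
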